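/- Let S₁, …, S_n be strings such that |S_i| = n − i + 1, no S_i is a prefix of another S_j, and whenever S_i and S_j have a common prefix of length ℓ > 0 then S_{i+1} and S_{j+1} have a common prefix of length at least ℓ − 1 (a quasi-suffix collection). Then for any substring consistent equivalence relation ≈ with encoding function E on a string T of length n, the collection S_i = Code(T[i..n])·#, where Code(X) = E(X[1]) E(X[1..2]) ⋯ E(X) and # is a fresh end-marker, is a quasi-suffix collection of n+1 strings (including S_{n+1} = #). -/

import Mathlib

/-- The substring X[i..i+len) for a 1-indexed position i. -/
def seg (X : List ℤ) (i len : ℕ) : List ℤ := (X.drop (i - 1)).take len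

set_option linter.unusedVariables false

section helpers
variable (E : List ℤ → ℤ) (T : List ℤ) (n : ℕ)

private def Sfun (i : ℕ) : List (Option ℤ) :=
  ((List.range (n + 1 - i)).map (fun t => some (E (seg T i (t + 1))))) ++ [none]

private lemma Sfun_len (i : ℕ) : (Sfun E T n i).length = (n + 1 - i) + 1 := by
  simp [Sfun]

private lemma Sfun_get_lt {i m : ℕ} (hm : m < n + 1 - i) :
    (Sfun E T n i)[m]? = some (some (E (seg T i (m + 1)))) := by
  rw [Sfun, List.getElem?_append]
  simp [hm]

private lemma Sfun_get_none (i : ℕ) :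
    (Sfun E T n i)[n + 1 - i]? = some none := by
  rw [Sfun, List.getElem?_append]
  simp

private lemma Sfun_take {i ℓ : ℕ} (hℓ : ℓ ≤ n + 1 - i) :
    (Sfun E T n i).take ℓ
      = (List.range ℓ).map (fun t => some (E (seg T i (t + 1)))) := by
  rw [Sfun, List.take_append_of_le_length (by simpa using hℓ),
    ← List.map_take, List.take_range, min_eq_left hℓ]

private lemma Sfun_bound {a b ℓ : ℕ} (hab : a < b)
    (h : (Sfun E T n a).take ℓ = (Sfun E T n b).take ℓ)
    (hℓ : n + 1 - b < ℓ) (hb : b ≤ n + 1) : False := by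
  have h1 := congrArg (fun l => l[n + 1 - b]?) h
  simp only [List.getElem?_take, if_pos hℓ] at h1
  rw [Sfun_get_none, Sfun_get_lt E T n (show n + 1 - b < n + 1 - a by omega)] at h1
  simp at h1

private lemma seg_length (hT : T.length = n) {i ℓ : ℕ} (hi : 1 ≤ i)
    (h : i + ℓ ≤ n + 1) : (seg T i ℓ).length = ℓ := by
  simp [seg, hT]; omega

private lemma seg_take {i ℓ m : ℕ} (hm : m ≤ ℓ) :
    (seg T i ℓ).take m = seg T i m := by
  simp [seg, List.take_take, min_eq_left hm]

private lemma seg_shift {i ℓ : ℕ} (hi : 1 ≤ i) :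
    seg (seg T i ℓ) 2 (ℓ - 1) = seg T (i + 1) (ℓ - 1) := by
  show ((((T.drop (i-1)).take ℓ).drop 1).take (ℓ-1)) = (T.drop i).take (ℓ-1)
  rw [List.drop_take, List.take_take, List.drop_drop, min_self,
    show i - 1 + 1 = i by omega]

end helpers

/-- for an SCER with encoding function E, the strings
S_i = Code(T[i..n])·# (for i ∈ [1..n+1]), where Code(X) is the list of
encodings of all nonempty prefixes of X and # is a fresh end-marker,
form a quasi-suffix collection. -/
theorem code_suffixes_form_quasi_suffix_collection
    (approx : List ℤ → List ℤ → Prop)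
    (hequiv : Equivalence approx)
    (hlen : ∀ X Y, approx X Y → X.length = Y.length)
    (hsub : ∀ X Y, approx X Y → ∀ i j, 1 ≤ i → i ≤ j → j ≤ X.length →
      approx (seg X i (j - i + 1)) (seg Y i (j - i + 1)))
    (E : List ℤ → ℤ)
    (hE : ∀ X Y, approx X Y ↔ (X.length = Y.length ∧
      ∀ i, 1 ≤ i → i ≤ X.length → E (X.take i) = E (Y.take i)))
    (T : List ℤ) (n : ℕ) (hT : T.length = n) :
    let S : ℕ → List (Option ℤ) := fun i =>
      ((List.range (n + 1 - i)).map (fun t => some (E (seg T i (t + 1))))) ++ [none]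
    ((S 1).length = n + 1) ∧
    (∀ i ∈ Finset.Icc 2 (n + 1), (S i).length = (S (i - 1)).length - 1) ∧
    (∀ i ∈ Finset.Icc 1 (n + 1), ∀ j ∈ Finset.Icc 1 (n + 1), i ≠ j →
      ¬ (S i <+: S j)) ∧
    (∀ i ∈ Finset.Icc 1 n, ∀ j ∈ Finset.Icc 1 n, ∀ ℓ, 1 ≤ ℓ →
      (S i).take ℓ = (S j).take ℓ →
      (S (i + 1)).take (ℓ - 1) = (S (j + 1)).take (ℓ - 1)) := by
  intro S
  rw [show S = Sfun E T n from rfl]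
  refine ⟨?_, ?_, ?_, ?_⟩
  · rw [Sfun_len]; omega
  · intro i hi
    simp only [Finset.mem_Icc] at hi
    rw [Sfun_len, Sfun_len]; omega
  · intro i hi j hj hij hpre
    simp only [Finset.mem_Icc] at hi hj
    have hlen' := hpre.length_le
    rw [Sfun_len, Sfun_len] at hlen'
    have hji : j < i := by omega
    have hmi : n + 1 - i < (Sfun E T n i).length := by rw [Sfun_len]; omega
    have hmj : n + 1 - i < (Sfun E T n j).length := by rw [Sfun_len]; omega
    have h1 : (Sfun E T n i)[n + 1 - i]'hmi = none := by
      have := Sfun_get_none E T n i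
      rw [List.getElem?_eq_getElem hmi] at this
      exact Option.some.inj this
    have h2 : (Sfun E T n j)[n + 1 - i]'hmj
        = some (E (seg T j (n + 1 - i + 1))) := by
      have := Sfun_get_lt E T n (show n + 1 - i < n + 1 - j by omega)
      rw [List.getElem?_eq_getElem hmj] at this
      exact Option.some.inj this
    have := hpre.getElem hmi
    rw [h1, h2] at this
    exact Option.some_ne_none _ this.symm
  · intro a ha b hb ℓ hℓ1 htake
    simp only [Finset.mem_Icc] at ha hb
    rcases eq_or_ne a b with rfl | hab
    · rfl
    rcases Nat.lt_or_ge ℓ 2 with hℓ2 | hℓ2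
    · have : ℓ - 1 = 0 := by omega
      rw [this]; rfl
    -- bounds : ℓ ≤ n + 1 - a and ℓ ≤ n + 1 - b
    have hba : ℓ ≤ n + 1 - a ∧ ℓ ≤ n + 1 - b := by
      by_contra hc
      push_neg at hc
      rcases Nat.lt_or_ge a b with h' | h'
      · exact Sfun_bound E T n h' htake (by omega) (by omega)
      · exact Sfun_bound E T n (by omega : b < a) htake.symm (by omega) (by omega)
    obtain ⟨hℓa, hℓb⟩ := hba
    -- entrywise equality of encodings
    have hent : ∀ t, t < ℓ → E (seg T a (t + 1)) = E (seg T b (t + 1)) := by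
      intro t ht
      have h1 := congrArg (fun l => l[t]?) htake
      simp only [List.getElem?_take, if_pos ht] at h1
      rw [Sfun_get_lt E T n (lt_of_lt_of_le ht hℓa),
        Sfun_get_lt E T n (lt_of_lt_of_le ht hℓb)] at h1
      exact Option.some.inj (Option.some.inj h1)
    have hlenA : (seg T a ℓ).length = ℓ := seg_length T n hT ha.1 (by omega)
    have hlenB : (seg T b ℓ).length = ℓ := seg_length T n hT hb.1 (by omega)
    have happrox : approx (seg T a ℓ) (seg T b ℓ) := by
      rw [hE]
      refine ⟨by rw [hlenA, hlenB], ?_⟩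
      intro t ht1 ht2
      rw [hlenA] at ht2
      rw [seg_take T ht2, seg_take T ht2]
      have := hent (t - 1) (by omega)
      rwa [show t - 1 + 1 = t by omega] at this
    have h2 := hsub _ _ happrox 2 ℓ (by norm_num) hℓ2 (by rw [hlenA])
    rw [show ℓ - 2 + 1 = ℓ - 1 by omega, seg_shift T ha.1, seg_shift T hb.1] at h2
    have hlenA' : (seg T (a + 1) (ℓ - 1)).length = ℓ - 1 :=
      seg_length T n hT (by omega) (by omega)
    have hent' : ∀ t, t < ℓ - 1 →
        E (seg T (a + 1) (t + 1)) = E (seg T (b + 1) (t + 1)) := by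
      intro t ht
      have := ((hE _ _).mp h2).2 (t + 1) (by omega) (by omega)
      rwa [seg_take T (by omega), seg_take T (by omega)] at this
    rw [Sfun_take E T n (show ℓ - 1 ≤ n + 1 - (a + 1) by omega),
      Sfun_take E T n (show ℓ - 1 ≤ n + 1 - (b + 1) by omega),
      List.map_eq_map_iff]
    intro t ht
    rw [List.mem_range] at ht
    rw [hent' t ht]
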